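/- Let A be a Nakayama algebra and let 0 → X₁ → Y → X₂ → 0 be a non-split short exact sequence with X₁ and X₂ indecomposable. Then Y has at most two indecomposable direct summands Y₁, Y₂, and the sequence is isomorphic to one where X₁ embeds into Y₁ and surjects onto Y₂, while Y₁ surjects onto X₂ and Y₂ embeds into X₂. -/

import Mathlib

noncomputable section
open Function

/-- A module is uniserial if its submodules are totally ordered by inclusion. -/
def IsUniserial (A : Type) [Ring A] (M : Type) [AddCommGroup M] [Module A M] : Prop :=
  ∀ U V : Submodule A M, U ≤ V ∨ V ≤ U

/-- An indecomposable module: nonzero, and every direct sum decomposition is trivial. -/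
def Indec (A : Type) [Ring A] (M : Type) [AddCommGroup M] [Module A M] : Prop :=
  Nontrivial M ∧ ∀ X Y : ModuleCat.{0} A, Nonempty (M ≃ₗ[A] (↑X × ↑Y)) →
    Subsingleton X ∨ Subsingleton Y

/-- A ring is a Nakayama algebra if every finitely generated indecomposable projective
module and every finitely generated indecomposable injective module is uniserial. -/
def IsNakayamaAlgebra (A : Type) [Ring A] : Prop :=
  (∀ P : ModuleCat.{0} A, Module.Finite A P → Module.Projective A P → Indec A P →
    IsUniserial A P) ∧
  (∀ Q : ModuleCat.{0} A, Module.Finite A Q → Module.Injective A Q → Indec A Q →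
    IsUniserial A Q)

namespace StmtAux

section Generic
variable {A : Type} [Ring A]

theorem indec_congr {M N : Type} [AddCommGroup M] [Module A M] [AddCommGroup N] [Module A N]
    (e : M ≃ₗ[A] N) (h : Indec A M) : Indec A N := by
  obtain ⟨hnt, hdec⟩ := h
  refine ⟨e.symm.toEquiv.nontrivial, fun X Y ⟨f⟩ => hdec X Y ⟨e.trans f⟩⟩

theorem uniserial_congr {M N : Type} [AddCommGroup M] [Module A M] [AddCommGroup N] [Module A N]
    (e : M ≃ₗ[A] N) (h : IsUniserial A M) : IsUniserial A N := by
  intro U V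
  let o := Submodule.orderIsoMapComap e
  rcases h (o.symm U) (o.symm V) with hh | hh
  · left; simpa using o.monotone hh
  · right; simpa using o.monotone hh

/-- images of submodules of a uniserial module under a linear map are comparable -/
theorem range_comparable {P M : Type} [AddCommGroup P] [Module A P] [AddCommGroup M] [Module A M]
    (hP : IsUniserial A P) (f : P →ₗ[A] M) {S T : Submodule A M}
    (hS : S ≤ LinearMap.range f) (hT : T ≤ LinearMap.range f) : S ≤ T ∨ T ≤ S := by
  have h1 : Submodule.map f (Submodule.comap f S) = S := by
    rw [Submodule.map_comap_eq, inf_eq_right.2 hS]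
  have h2 : Submodule.map f (Submodule.comap f T) = T := by
    rw [Submodule.map_comap_eq, inf_eq_right.2 hT]
  rcases hP (Submodule.comap f S) (Submodule.comap f T) with hh | hh
  · left; rw [← h1, ← h2]; exact Submodule.map_mono hh
  · right; rw [← h1, ← h2]; exact Submodule.map_mono hh

theorem uniserial_subtype {P M : Type} [AddCommGroup P] [Module A P] [AddCommGroup M] [Module A M]
    (hP : IsUniserial A P) (f : P →ₗ[A] M) (U : Submodule A M) (hU : U ≤ LinearMap.range f) :
    IsUniserial A ↥U := by
  intro S T
  have hS : Submodule.map U.subtype S ≤ LinearMap.range f :=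
    le_trans (Submodule.map_subtype_le U S) hU
  have hT : Submodule.map U.subtype T ≤ LinearMap.range f :=
    le_trans (Submodule.map_subtype_le U T) hU
  rcases range_comparable hP f hS hT with hh | hh
  · left; exact (Submodule.map_le_map_iff_of_injective U.injective_subtype _ _).1 hh
  · right; exact (Submodule.map_le_map_iff_of_injective U.injective_subtype _ _).1 hh

theorem exists_decomp {M : Type} [AddCommGroup M] [Module A M]
    (hnt : Nontrivial M) (h : ¬ Indec A M) :
    ∃ (X Y : ModuleCat.{0} A) (e : M ≃ₗ[A] (↑X × ↑Y)), Nontrivial ↑X ∧ Nontrivial ↑Y := by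
  unfold Indec at h
  push_neg at h
  obtain ⟨X, Y, hiso, hX, hY⟩ := h hnt
  exact ⟨X, Y, hiso.some, hX,
    hY⟩

theorem injective_of_retract {E Q : Type} [AddCommGroup E] [Module A E] [AddCommGroup Q]
    [Module A Q] (hE : Module.Injective A E) (ι : Q →ₗ[A] E) (ρ : E →ₗ[A] Q)
    (h : ρ.comp ι = LinearMap.id) : Module.Injective A Q := by
  constructor
  intro X Y _ _ _ _ f hf g
  obtain ⟨h', hh'⟩ := hE.out f hf (ι.comp g)
  refine ⟨ρ.comp h', fun x => ?_⟩
  have := hh' x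
  simp only [LinearMap.comp_apply] at this ⊢
  rw [this, ← LinearMap.comp_apply ρ ι, h, LinearMap.id_apply]

end Generic

section KStuff
variable {K A : Type} [Field K] [Ring A] [Algebra K A]

theorem ksmul_eq {M : Type} [AddCommGroup M] [Module A M] [Module K M] [IsScalarTower K A M]
    (k : K) (m : M) : (algebraMap K A k) • m = k • m := by
  rw [Algebra.algebraMap_eq_smul_one, smul_assoc, one_smul]

theorem tower_of {M : Type} [AddCommGroup M] [Module A M] [mk : Module K M]
    (h : ∀ (k : K) (m : M), k • m = (algebraMap K A k) • m) : IsScalarTower K A M := by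
  constructor
  intro k a m
  rw [h, Algebra.smul_def, mul_smul]

/-- the `K`-module structure on any `A`-module obtained by restriction of scalars. -/
abbrev kmod (M : Type) [AddCommGroup M] [Module A M] : Module K M :=
  Module.compHom M (algebraMap K A)

theorem kmod_tower (M : Type) [AddCommGroup M] [Module A M] :
    letI := kmod (K := K) (A := A) M
    IsScalarTower K A M := by
  letI := kmod (K := K) (A := A) M
  exact tower_of (fun k m => rfl)

end KStuff

section Coind
variable (K A : Type) [Field K] [Ring A] [Algebra K A]
variable (M : Type) [AddCommGroup M] [Module K M]

/-- coinduced module: `Hom_K(A, M)` with the action `(a • f) x = f (x * a)`. -/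
def Coind : Type := A →ₗ[K] M

variable {K A M}

/-- interpret an element of `Coind` as a linear map -/
def Coind.lin (f : Coind K A M) : A →ₗ[K] M := f

/-- build an element of `Coind` from a linear map -/
def Coind.mk' (f : A →ₗ[K] M) : Coind K A M := f

variable (K A M)

instance : AddCommGroup (Coind K A M) := inferInstanceAs (AddCommGroup (A →ₗ[K] M))
instance : Module K (Coind K A M) := inferInstanceAs (Module K (A →ₗ[K] M))

instance : SMul A (Coind K A M) :=
  ⟨fun a f => Coind.mk' (f.lin.comp (LinearMap.mulRight K a))⟩

variable {K A M}

theorem Coind.ext {f g : Coind K A M} (h : ∀ x, f.lin x = g.lin x) : f = g :=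
  LinearMap.ext h

theorem Coind.smul_lin (a : A) (f : Coind K A M) (x : A) : (a • f).lin x = f.lin (x * a) := rfl

theorem Coind.add_lin (f g : Coind K A M) (x : A) : (f + g).lin x = f.lin x + g.lin x := rfl

theorem Coind.zero_lin (x : A) : (0 : Coind K A M).lin x = 0 := rfl

theorem Coind.ksmul_lin (k : K) (f : Coind K A M) (x : A) : (k • f).lin x = k • (f.lin x) := rfl

variable (K A M)

instance : Module A (Coind K A M) where
  one_smul f := Coind.ext fun x => by rw [Coind.smul_lin, mul_one]
  mul_smul a b f := Coind.ext fun x => by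
    rw [Coind.smul_lin, Coind.smul_lin, Coind.smul_lin, mul_assoc]
  smul_zero a := Coind.ext fun x => by rw [Coind.smul_lin, Coind.zero_lin, Coind.zero_lin]
  smul_add a f g := Coind.ext fun x => by
    rw [Coind.smul_lin, Coind.add_lin, Coind.add_lin, Coind.smul_lin, Coind.smul_lin]
  add_smul a b f := Coind.ext fun x => by
    rw [Coind.smul_lin, Coind.add_lin, Coind.smul_lin, Coind.smul_lin, mul_add, map_add]
  zero_smul f := Coind.ext fun x => by
    rw [Coind.smul_lin, Coind.zero_lin, mul_zero, map_zero]

instance : IsScalarTower K A (Coind K A M) := by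
  constructor
  intro k a f
  refine Coind.ext fun x => ?_
  rw [Coind.ksmul_lin, Coind.smul_lin, Coind.smul_lin, Algebra.smul_def, ← mul_assoc,
    ← Algebra.commutes k x, mul_assoc, ← Algebra.smul_def, map_smul]

/-- extension of linear maps of vector spaces -/
theorem field_extend {X Y : Type} [AddCommGroup X] [AddCommGroup Y] [Module K X] [Module K Y]
    (f : X →ₗ[K] Y) (hf : Injective f) (psi : X →ₗ[K] M) :
    ∃ h : Y →ₗ[K] M, ∀ x, h (f x) = psi x := by
  obtain ⟨c, hc⟩ := (LinearMap.range f).exists_isCompl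
  let eqv := LinearEquiv.ofInjective f hf
  refine ⟨psi ∘ₗ (eqv.symm : ↥(LinearMap.range f) →ₗ[K] X) ∘ₗ
      Submodule.projectionOnto _ c hc, fun x => ?_⟩
  have h1 : Submodule.projectionOnto _ c hc (f x) = eqv x := by
    have : f x = ↑(eqv x) := by rw [LinearEquiv.ofInjective_apply]
    rw [this, Submodule.projectionOnto_apply_left hc]
  simp only [LinearMap.comp_apply, h1]
  rw [LinearEquiv.coe_coe, LinearEquiv.symm_apply_apply]

end Coind

section CoindInj
variable {K A : Type} [Field K] [Ring A] [Algebra K A]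
variable {M : Type} [AddCommGroup M] [Module A M] [Module K M] [IsScalarTower K A M]

theorem coind_injective : Module.Injective A (Coind K A M) := by
  constructor
  intro X Y _ _ _ _ f hf g
  letI : Module K X := kmod (K := K) (A := A) X
  haveI : IsScalarTower K A X := kmod_tower (K := K) (A := A) X
  letI : Module K Y := kmod (K := K) (A := A) Y
  haveI : IsScalarTower K A Y := kmod_tower (K := K) (A := A) Y
  let psi : X →ₗ[K] M :=
    { toFun := fun x => (g x).lin 1
      map_add' := fun x y => by
        show (g (x + y)).lin 1 = (g x).lin 1 + (g y).lin 1
        rw [map_add, Coind.add_lin]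
      map_smul' := fun k x => by
        show (g ((algebraMap K A k) • x)).lin 1 = k • (g x).lin 1
        have h2 : (algebraMap K A k) = k • (1 : A) := by rw [Algebra.smul_def, mul_one]
        rw [map_smul, Coind.smul_lin, one_mul, h2, map_smul] }
  let fK : X →ₗ[K] Y :=
    { toFun := f
      map_add' := f.map_add
      map_smul' := fun k x => by
        show f ((algebraMap K A k) • x) = (algebraMap K A k) • f x
        rw [map_smul] }
  obtain ⟨h0, hh0⟩ := field_extend (K := K) (M := M) fK hf psi
  let hlin : Y →ₗ[A] Coind K A M :=
    { toFun := fun y => Coind.mk'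
        { toFun := fun x => h0 (x • y)
          map_add' := fun x x' => by
            show h0 ((x + x') • y) = h0 (x • y) + h0 (x' • y)
            rw [add_smul, map_add]
          map_smul' := fun k x => by
            show h0 ((k • x) • y) = k • h0 (x • y)
            rw [Algebra.smul_def, mul_smul, ksmul_eq (A := A), map_smul] }
      map_add' := fun y y' => Coind.ext fun x => by
        show h0 (x • (y + y')) = h0 (x • y) + h0 (x • y')
        rw [smul_add, map_add]
      map_smul' := fun a y => Coind.ext fun x => by
        show h0 (x • (a • y)) = h0 ((x * a) • y)
        rw [mul_smul] }
  refine ⟨hlin, fun x => ?_⟩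
  refine Coind.ext fun t => ?_
  show h0 (t • f x) = (g x).lin t
  have h3 : t • f x = f (t • x) := (map_smul f t x).symm
  have h4 : h0 (fK (t • x)) = psi (t • x) := hh0 (t • x)
  rw [h3]
  rw [show f (t • x) = fK (t • x) from rfl, h4]
  show (g (t • x)).lin 1 = (g x).lin t
  rw [map_smul, Coind.smul_lin, one_mul]

/-- the canonical embedding of `M` into its coinduced module -/
def coindEmb : M →ₗ[A] Coind K A M where
  toFun m := Coind.mk'
    { toFun := fun x => x • m
      map_add' := fun x y => add_smul x y m
      map_smul' := fun k x => by
        show ((k • x) : A) • m = k • (x • m)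
        rw [Algebra.smul_def, mul_smul, ksmul_eq (A := A)] }
  map_add' m m' := Coind.ext fun x => smul_add x m m'
  map_smul' a m := Coind.ext fun x => by
    show x • (a • m) = (x * a) • m
    rw [mul_smul]

theorem coindEmb_injective : Injective (coindEmb (K := K) (A := A) (M := M)) := by
  intro m m' h
  have h2 := congrArg (fun f : Coind K A M => f.lin 1) h
  show m = m'
  rw [← one_smul A m, ← one_smul A m']
  exact h2

theorem coind_finite [FiniteDimensional K A] [Module.Finite K M] :
    Module.Finite A (Coind K A M) := by
  haveI : Module.Finite K (Coind K A M) := inferInstanceAs (Module.Finite K (A →ₗ[K] M))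
  exact Module.Finite.of_restrictScalars_finite K A _

end CoindInj

section Induct
variable {K A : Type} [Field K] [Ring A] [Algebra K A] [FiniteDimensional K A]

/-- Given a uniserial submodule of a f.g. injective module, one can project onto a
uniserial f.g. injective module so that the submodule maps injectively. -/
theorem L3aux (hNak : IsNakayamaAlgebra A) :
    ∀ (n : ℕ) (E : Type) [AddCommGroup E] [Module A E] [Module K E] [IsScalarTower K A E],
      Module.finrank K E ≤ n → Module.Finite A E → Module.Injective A E →
      ∀ (W : Type) [AddCommGroup W] [Module A W], IsUniserial A W → Nontrivial W →
      ∀ u : W →ₗ[A] E, Injective u →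
      ∃ (Q : ModuleCat.{0} A) (pi : E →ₗ[A] Q.carrier),
        Module.Finite A Q.carrier ∧ Module.Injective A Q.carrier ∧ IsUniserial A Q.carrier ∧
        Injective ⇑(pi ∘ₗ u) := by
  intro n
  induction n with
  | zero =>
    intro E _ _ _ _ hfr hfin _ W _ _ _ hnt u hu
    exfalso
    haveI : Module.Finite K E := Module.Finite.trans A E
    haveI : Subsingleton E := by
      rw [← Module.finrank_zero_iff (R := K)]
      omega
    obtain ⟨w, w', hww⟩ := hnt
    exact hww (hu (Subsingleton.elim _ _))
  | succ n ih =>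
    intro E _ _ _ _ hfr hfin hinj W _ _ hW hnt u hu
    haveI : Module.Finite K E := Module.Finite.trans A E
    by_cases hind : Indec A E
    · refine ⟨ModuleCat.of A E, LinearMap.id, hfin, hinj,
        hNak.2 (ModuleCat.of A E) hfin hinj hind, ?_⟩
      rw [LinearMap.id_comp]
      exact hu
    by_cases hnt' : Nontrivial E
    swap
    · exfalso
      haveI : Subsingleton E := not_nontrivial_iff_subsingleton.1 hnt'
      obtain ⟨w, w', hww⟩ := hnt
      exact hww (hu (Subsingleton.elim _ _))
    obtain ⟨X, Y, e, hX, hY⟩ := exists_decomp hnt' hind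
    letI : Module K ↑X := kmod (K := K) (A := A) ↑X
    haveI : IsScalarTower K A ↑X := kmod_tower (K := K) (A := A) ↑X
    letI : Module K ↑Y := kmod (K := K) (A := A) ↑Y
    haveI : IsScalarTower K A ↑Y := kmod_tower (K := K) (A := A) ↑Y
    set p1 : E →ₗ[A] ↑X := (LinearMap.fst A ↑X ↑Y).comp e.toLinearMap with hp1
    set p2 : E →ₗ[A] ↑Y := (LinearMap.snd A ↑X ↑Y).comp e.toLinearMap with hp2
    have hp1s : Surjective p1 := Prod.fst_surjective.comp e.surjective
    have hp2s : Surjective p2 := Prod.snd_surjective.comp e.surjective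
    haveI : Module.Finite A ↑X := Module.Finite.of_surjective p1 hp1s
    haveI : Module.Finite A ↑Y := Module.Finite.of_surjective p2 hp2s
    haveI : Module.Finite K ↑X := Module.Finite.trans A ↑X
    haveI : Module.Finite K ↑Y := Module.Finite.trans A ↑Y
    have he : Module.finrank K E = Module.finrank K ↑X + Module.finrank K ↑Y := by
      rw [(e.restrictScalars K).finrank_eq, Module.finrank_prod]
    have hX1 : 0 < Module.finrank K ↑X := Module.finrank_pos_iff.2 hX
    have hY1 : 0 < Module.finrank K ↑Y := Module.finrank_pos_iff.2 hY
    have hXinj : Module.Injective A ↑X := by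
      refine injective_of_retract hinj (e.symm.toLinearMap.comp (LinearMap.inl A ↑X ↑Y)) p1 ?_
      ext x
      simp [hp1]
    have hYinj : Module.Injective A ↑Y := by
      refine injective_of_retract hinj (e.symm.toLinearMap.comp (LinearMap.inr A ↑X ↑Y)) p2 ?_
      ext x
      simp [hp2]
    by_cases hinj1 : Injective ⇑(p1 ∘ₗ u)
    · obtain ⟨Q, pi, hQ1, hQ2, hQ3, hQ4⟩ :=
        ih ↑X (by omega) (inferInstance) hXinj W hW hnt (p1 ∘ₗ u) hinj1
      refine ⟨Q, pi ∘ₗ p1, hQ1, hQ2, hQ3, ?_⟩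
      rw [LinearMap.comp_assoc]
      exact hQ4
    · have hker : LinearMap.ker (p1 ∘ₗ u) ⊓ LinearMap.ker (p2 ∘ₗ u) = ⊥ := by
        refine le_antisymm ?_ bot_le
        intro w hw
        simp only [Submodule.mem_inf, LinearMap.mem_ker, LinearMap.comp_apply] at hw
        have : e (u w) = 0 := Prod.ext hw.1 hw.2
        have : u w = 0 := by
          apply e.injective
          simpa using this
        have : u w = u 0 := by simpa using this
        simpa using hu this
      rcases hW (LinearMap.ker (p1 ∘ₗ u)) (LinearMap.ker (p2 ∘ₗ u)) with hcc | hcc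
      · exfalso
        have hb : LinearMap.ker (p1 ∘ₗ u) = ⊥ :=
          le_antisymm (by rw [← hker]; exact le_inf le_rfl hcc) bot_le
        exact hinj1 (LinearMap.ker_eq_bot.1 hb)
      · have hb : LinearMap.ker (p2 ∘ₗ u) = ⊥ :=
          le_antisymm (by rw [← hker]; exact le_inf hcc le_rfl) bot_le
        obtain ⟨Q, pi, hQ1, hQ2, hQ3, hQ4⟩ :=
          ih ↑Y (by omega) (inferInstance) hYinj W hW hnt (p2 ∘ₗ u) (LinearMap.ker_eq_bot.1 hb)
        refine ⟨Q, pi ∘ₗ p2, hQ1, hQ2, hQ3, ?_⟩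
        rw [LinearMap.comp_assoc]
        exact hQ4

/-- Every image of a f.g. projective module is covered by finitely many images of
f.g. indecomposable projective modules. -/
theorem L2aux :
    ∀ (n : ℕ) (P : Type) [AddCommGroup P] [Module A P] [Module K P] [IsScalarTower K A P],
      Module.finrank K P ≤ n → Module.Finite A P → Module.Projective A P →
      ∀ (M : Type) [AddCommGroup M] [Module A M] (f : P →ₗ[A] M),
      ∃ s : Finset (Submodule A M),
        (∀ V ∈ s, ∃ (P' : ModuleCat.{0} A) (g : P'.carrier →ₗ[A] M),
          Module.Finite A P'.carrier ∧ Module.Projective A P'.carrier ∧ Indec A P'.carrier ∧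
          LinearMap.range g = V) ∧ LinearMap.range f ≤ s.sup id := by
  intro n
  induction n with
  | zero =>
    intro P _ _ _ _ hfr hfin _ M _ _ f
    haveI : Module.Finite K P := Module.Finite.trans A P
    haveI : Subsingleton P := by
      rw [← Module.finrank_zero_iff (R := K)]
      omega
    refine ⟨∅, by simp, ?_⟩
    rintro y ⟨x, rfl⟩
    rw [Subsingleton.elim x 0, map_zero]
    simp
  | succ n ih =>
    intro P _ _ _ _ hfr hfin hproj M _ _ f
    classical
    haveI : Module.Finite K P := Module.Finite.trans A P
    by_cases hind : Indec A P
    · refine ⟨{LinearMap.range f}, ?_, by simp⟩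
      intro V hV
      rw [Finset.mem_singleton] at hV
      exact ⟨ModuleCat.of A P, f, hfin, hproj, hind, hV.symm⟩
    by_cases hnt' : Nontrivial P
    swap
    · haveI : Subsingleton P := not_nontrivial_iff_subsingleton.1 hnt'
      refine ⟨∅, by simp, ?_⟩
      rintro y ⟨x, rfl⟩
      rw [Subsingleton.elim x 0, map_zero]
      simp
    obtain ⟨X, Y, e, hX, hY⟩ := exists_decomp hnt' hind
    letI : Module K ↑X := kmod (K := K) (A := A) ↑X
    haveI : IsScalarTower K A ↑X := kmod_tower (K := K) (A := A) ↑X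
    letI : Module K ↑Y := kmod (K := K) (A := A) ↑Y
    haveI : IsScalarTower K A ↑Y := kmod_tower (K := K) (A := A) ↑Y
    set p1 : P →ₗ[A] ↑X := (LinearMap.fst A ↑X ↑Y).comp e.toLinearMap with hp1
    set p2 : P →ₗ[A] ↑Y := (LinearMap.snd A ↑X ↑Y).comp e.toLinearMap with hp2
    set i1 : ↑X →ₗ[A] P := e.symm.toLinearMap.comp (LinearMap.inl A ↑X ↑Y) with hi1
    set i2 : ↑Y →ₗ[A] P := e.symm.toLinearMap.comp (LinearMap.inr A ↑X ↑Y) with hi2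
    have hp1s : Surjective p1 := Prod.fst_surjective.comp e.surjective
    have hp2s : Surjective p2 := Prod.snd_surjective.comp e.surjective
    haveI : Module.Finite A ↑X := Module.Finite.of_surjective p1 hp1s
    haveI : Module.Finite A ↑Y := Module.Finite.of_surjective p2 hp2s
    haveI : Module.Finite K ↑X := Module.Finite.trans A ↑X
    haveI : Module.Finite K ↑Y := Module.Finite.trans A ↑Y
    have he : Module.finrank K P = Module.finrank K ↑X + Module.finrank K ↑Y := by
      rw [(e.restrictScalars K).finrank_eq, Module.finrank_prod]
    have hX1 : 0 < Module.finrank K ↑X := Module.finrank_pos_iff.2 hX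
    have hY1 : 0 < Module.finrank K ↑Y := Module.finrank_pos_iff.2 hY
    have hXproj : Module.Projective A ↑X := by
      refine Module.Projective.of_split i1 p1 ?_
      ext x
      simp [hp1, hi1]
    have hYproj : Module.Projective A ↑Y := by
      refine Module.Projective.of_split i2 p2 ?_
      ext x
      simp [hp2, hi2]
    obtain ⟨s1, hs1, hs1r⟩ := ih ↑X (by omega) (inferInstance) hXproj M (f ∘ₗ i1)
    obtain ⟨s2, hs2, hs2r⟩ := ih ↑Y (by omega) (inferInstance) hYproj M (f ∘ₗ i2)
    refine ⟨s1 ∪ s2, ?_, ?_⟩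
    · intro V hV
      rcases Finset.mem_union.1 hV with h | h
      · exact hs1 V h
      · exact hs2 V h
    · rintro y ⟨x, rfl⟩
      have hx : x = i1 (p1 x) + i2 (p2 x) := by
        simp only [hp1, hp2, hi1, hi2, LinearMap.comp_apply, LinearEquiv.coe_coe,
          LinearMap.fst_apply, LinearMap.snd_apply, LinearMap.inl_apply, LinearMap.inr_apply]
        rw [← map_add]
        rw [Prod.mk_add_mk, add_zero, zero_add]
        exact (e.symm_apply_apply x).symm
      rw [hx, map_add]
      have m1 : f (i1 (p1 x)) ∈ s1.sup id := hs1r ⟨p1 x, rfl⟩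
      have m2 : f (i2 (p2 x)) ∈ s2.sup id := hs2r ⟨p2 x, rfl⟩
      rw [Finset.sup_union]
      exact Submodule.add_mem _ (Submodule.mem_sup_left m1) (Submodule.mem_sup_right m2)

end Induct

section Rank
variable {K A : Type} [Field K] [Ring A] [Algebra K A]
variable {M N : Type} [AddCommGroup M] [Module A M] [Module K M] [IsScalarTower K A M]
variable [AddCommGroup N] [Module A N] [Module K N] [IsScalarTower K A N]

theorem rank_lt_of_lt [Module.Finite K N] {S T : Submodule A N} (h : S < T) :
    Module.finrank K (S.restrictScalars K) < Module.finrank K (T.restrictScalars K) := by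
  have h2 : S.restrictScalars K < T.restrictScalars K :=
    (Submodule.restrictScalarsEmbedding K A N).strictMono h
  exact Submodule.finrank_lt_finrank_of_lt h2

theorem map_rS (g : M →ₗ[A] N) (S : Submodule A M) :
    Submodule.map (g.restrictScalars K) (S.restrictScalars K) =
      (Submodule.map g S).restrictScalars K := by
  ext x
  simp only [Submodule.mem_map, Submodule.restrictScalars_mem, LinearMap.coe_restrictScalars]

theorem rank_map_le [Module.Finite K M] (g : M →ₗ[A] N) (S : Submodule A M) :
    Module.finrank K ((Submodule.map g S).restrictScalars K) ≤
      Module.finrank K (S.restrictScalars K) := by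
  rw [← map_rS]
  exact Submodule.finrank_map_le (g.restrictScalars K) (S.restrictScalars K)

theorem rank_map_eq (g : M →ₗ[A] N) (S : Submodule A M)
    (hg : Injective ⇑(g ∘ₗ S.subtype)) :
    Module.finrank K ((Submodule.map g S).restrictScalars K) =
      Module.finrank K (S.restrictScalars K) := by
  set f' : ↥(S.restrictScalars K) →ₗ[K] N :=
    (g.restrictScalars K) ∘ₗ (S.restrictScalars K).subtype with hf'
  have hinj : Injective ⇑f' := by
    intro x y hxy
    have hx : (x : M) ∈ S := (Submodule.restrictScalars_mem K S _).1 x.2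
    have hy : (y : M) ∈ S := (Submodule.restrictScalars_mem K S _).1 y.2
    have : (⟨(x : M), hx⟩ : ↥S) = ⟨(y : M), hy⟩ := hg hxy
    exact Subtype.ext (congrArg Subtype.val this)
  have hrange : LinearMap.range f' = (Submodule.map g S).restrictScalars K := by
    ext z
    simp only [hf', LinearMap.mem_range, Submodule.restrictScalars_mem, Submodule.mem_map]
    constructor
    · rintro ⟨x, rfl⟩
      exact ⟨(x : M), (Submodule.restrictScalars_mem K S _).1 x.2, rfl⟩
    · rintro ⟨m, hm, rfl⟩
      exact ⟨⟨m, (Submodule.restrictScalars_mem K S _).2 hm⟩, rfl⟩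
  rw [← hrange]
  exact (LinearEquiv.ofInjective f' hinj).finrank_eq.symm

end Rank

section Central
variable {A : Type} [Ring A]

/-- The central theorem: every finitely generated indecomposable module over a
Nakayama algebra is uniserial. -/
theorem indec_uniserial (K : Type) [Field K] [Algebra K A] [FiniteDimensional K A]
    (hNak : IsNakayamaAlgebra A) (M : Type) [AddCommGroup M] [Module A M]
    [Module.Finite A M] (hM : Indec A M) : IsUniserial A M := by
  classical
  haveI : Nontrivial M := hM.1
  letI : Module K M := kmod (K := K) (A := A) M
  haveI : IsScalarTower K A M := kmod_tower (K := K) (A := A) M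
  haveI : Module.Finite K M := Module.Finite.trans A M
  set mu : Submodule A M → ℕ := fun S => Module.finrank K (S.restrictScalars K) with hmu
  set Ach : Set ℕ := {r | ∃ (P : ModuleCat.{0} A) (f : P.carrier →ₗ[A] M),
    Module.Finite A P.carrier ∧ Module.Projective A P.carrier ∧ Indec A P.carrier ∧
    mu (LinearMap.range f) = r} with hAch
  have hbdd : BddAbove Ach := by
    refine ⟨Module.finrank K M, ?_⟩
    rintro r ⟨P, f, -, -, -, rfl⟩
    exact Submodule.finrank_le _
  -- a nonzero element of M
  obtain ⟨m0, hm0⟩ := exists_ne (0 : M)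
  obtain ⟨s0, hs0, hs0r⟩ := L2aux (K := K) (Module.finrank K A) A le_rfl inferInstance
    inferInstance M (LinearMap.toSpanSingleton A M m0)
  have hm0mem : m0 ∈ s0.sup id := by
    refine hs0r ⟨1, ?_⟩
    simp [LinearMap.toSpanSingleton_apply]
  have hV0 : ∃ V ∈ s0, V ≠ ⊥ := by
    by_contra hc
    push_neg at hc
    have : s0.sup id ≤ ⊥ := Finset.sup_le fun V hV => le_of_eq (hc V hV)
    exact hm0 (this hm0mem)
  obtain ⟨V0, hV0s, hV0ne⟩ := hV0
  have hV0pos : 1 ≤ mu V0 := by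
    obtain ⟨v, hv, hvne⟩ := Submodule.exists_mem_ne_zero_of_ne_bot hV0ne
    have : Nontrivial (V0.restrictScalars K) :=
      ⟨⟨⟨v, (Submodule.restrictScalars_mem K V0 v).2 hv⟩, 0, by
        simp only [ne_eq, Submodule.mk_eq_zero]
        exact hvne⟩⟩
    exact Module.finrank_pos_iff.2 this
  have hAchne : Ach.Nonempty := by
    obtain ⟨P', g', h1, h2, h3, h4⟩ := hs0 V0 hV0s
    exact ⟨mu V0, P', g', h1, h2, h3, by rw [h4]⟩
  set Nn : ℕ := sSup Ach with hNn
  have hNmem : Nn ∈ Ach := Nat.sSup_mem hAchne hbdd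
  obtain ⟨P0, f0, hP0fin, hP0proj, hP0ind, hrank⟩ := hNmem
  have hNpos : 1 ≤ Nn := le_trans hV0pos (by
    obtain ⟨P', g', h1, h2, h3, h4⟩ := hs0 V0 hV0s
    exact le_csSup hbdd ⟨P', g', h1, h2, h3, by rw [h4]⟩)
  have hP0uni : IsUniserial A P0.carrier := hNak.1 P0 hP0fin hP0proj hP0ind
  set U : Submodule A M := LinearMap.range f0 with hU
  have hUne : U ≠ ⊥ := by
    intro hc
    rw [hc] at hrank
    rw [hmu] at hrank
    have h0 : Module.finrank K ↥(Submodule.restrictScalars K (⊥ : Submodule A M)) = 0 := by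
      haveI : Subsingleton ↥(Submodule.restrictScalars K (⊥ : Submodule A M)) :=
        ⟨fun a b => Subtype.ext (by
          have ha := a.2
          have hb := b.2
          simp only [Submodule.restrictScalars_mem, Submodule.mem_bot] at ha hb
          rw [ha, hb])⟩
      exact Module.finrank_zero_of_subsingleton
    have h1 : Nn = 0 := hrank.symm.trans h0
    omega
  have hUuni : IsUniserial A ↥U := uniserial_subtype hP0uni f0 U le_rfl
  have hUnt : Nontrivial ↥U := Submodule.nontrivial_iff_ne_bot.2 hUne
  -- the coinduced injective module
  have hEinj : Module.Injective A (Coind K A M) := coind_injective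
  haveI hEfin : Module.Finite A (Coind K A M) := coind_finite
  have hiu : Injective ⇑(coindEmb (K := K) (A := A) (M := M) ∘ₗ U.subtype) :=
    coindEmb_injective.comp U.injective_subtype
  obtain ⟨Q, pi, hQfin, hQinj, hQuni, hpinj⟩ := L3aux (K := K) hNak
    (Module.finrank K (Coind K A M)) (Coind K A M) le_rfl hEfin hEinj
    ↥U hUuni hUnt (coindEmb ∘ₗ U.subtype) hiu
  letI : Module K Q.carrier := kmod (K := K) (A := A) Q.carrier
  haveI : IsScalarTower K A Q.carrier := kmod_tower (K := K) (A := A) Q.carrier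
  haveI : Module.Finite K Q.carrier := Module.Finite.trans A Q.carrier
  set g : M →ₗ[A] Q.carrier := pi ∘ₗ coindEmb with hg
  have hgU : Injective ⇑(g ∘ₗ U.subtype) := by
    rw [hg, LinearMap.comp_assoc]
    exact hpinj
  -- main claim : everything maps into the image of U
  have claim : Submodule.map g ⊤ ≤ Submodule.map g U := by
    by_contra hcon
    obtain ⟨y, hy1, hy2⟩ := SetLike.not_le_iff_exists.1 hcon
    obtain ⟨m, -, rfl⟩ := Submodule.mem_map.1 hy1
    obtain ⟨s, hs, hsr⟩ := L2aux (K := K) (Module.finrank K A) A le_rfl inferInstance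
      inferInstance M (LinearMap.toSpanSingleton A M m)
    have hm : m ∈ s.sup id := by
      refine hsr ⟨1, ?_⟩
      simp [LinearMap.toSpanSingleton_apply]
    have hmap : ∀ t : Finset (Submodule A M),
        Submodule.map g (t.sup id) = t.sup (fun V => Submodule.map g V) := by
      intro t
      induction t using Finset.induction with
      | empty => simp
      | insert _ _ h ih =>
        rw [Finset.sup_insert, Finset.sup_insert, Submodule.map_sup, ih]
        rfl
    have hgm : g m ∈ s.sup (fun V => Submodule.map g V) := by
      rw [← hmap]
      exact Submodule.mem_map_of_mem hm
    have hsne : s.Nonempty := by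
      rcases Finset.eq_empty_or_nonempty s with h | h
      · exfalso
        rw [h] at hgm
        simp only [Finset.sup_empty, Submodule.mem_bot] at hgm
        exact hy2 (hgm ▸ Submodule.zero_mem _)
      · exact h
    obtain ⟨V0', hV0's, hV0'max⟩ := s.exists_max_image
      (fun V => Module.finrank K ((Submodule.map g V).restrictScalars K)) hsne
    have hmax : ∀ V ∈ s, Submodule.map g V ≤ Submodule.map g V0' := by
      intro V hV
      rcases hQuni (Submodule.map g V) (Submodule.map g V0') with h | h
      · exact h
      · rcases eq_or_lt_of_le h with he | hlt
        · exact le_of_eq he.symm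
        · exfalso
          have := rank_lt_of_lt (K := K) hlt
          have h2 := hV0'max V hV
          omega
    have hgm0 : g m ∈ Submodule.map g V0' := (Finset.sup_le hmax) hgm
    obtain ⟨P', g', hP'fin, hP'proj, hP'ind, hrange⟩ := hs V0' hV0's
    have hlt : Submodule.map g U < Submodule.map g V0' := by
      rcases hQuni (Submodule.map g V0') (Submodule.map g U) with h | h
      · exact absurd (h hgm0) hy2
      · exact lt_of_le_of_ne h (fun he => hy2 (he ▸ hgm0))
    have h1 : Module.finrank K ((Submodule.map g U).restrictScalars K) <
        Module.finrank K ((Submodule.map g V0').restrictScalars K) :=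
      rank_lt_of_lt (K := K) hlt
    have h2 : Module.finrank K ((Submodule.map g V0').restrictScalars K) ≤ mu V0' :=
      rank_map_le g V0'
    have h3 : Module.finrank K ((Submodule.map g U).restrictScalars K) = mu U :=
      rank_map_eq g U hgU
    have h4 : mu V0' ≤ Nn := le_csSup hbdd ⟨P', g', hP'fin, hP'proj, hP'ind, by rw [hrange]⟩
    have h5 : mu U = Nn := hrank
    omega
  -- build the retraction r : M → U
  have hrange_eq : LinearMap.range (g ∘ₗ U.subtype) = Submodule.map g U := by
    rw [LinearMap.range_comp, Submodule.range_subtype]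
  have hmem : ∀ x : M, g x ∈ LinearMap.range (g ∘ₗ U.subtype) := fun x => by
    rw [hrange_eq]
    exact claim (Submodule.mem_map_of_mem trivial)
  set eU : ↥U ≃ₗ[A] ↥(LinearMap.range (g ∘ₗ U.subtype)) :=
    LinearEquiv.ofInjective (g ∘ₗ U.subtype) hgU with heU
  set g' : M →ₗ[A] ↥(LinearMap.range (g ∘ₗ U.subtype)) :=
    g.codRestrict _ hmem with hg'
  set r : M →ₗ[A] ↥U := (eU.symm : ↥(LinearMap.range (g ∘ₗ U.subtype)) →ₗ[A] ↥U) ∘ₗ g' with hr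
  have hru : ∀ u : ↥U, r ↑u = u := by
    intro u
    have h1 : eU (r ↑u) = g' ↑u := by
      rw [hr]
      simp only [LinearMap.comp_apply, LinearEquiv.coe_coe]
      exact eU.apply_symm_apply _
    have h2 : ((g' ↑u : ↥(LinearMap.range (g ∘ₗ U.subtype))) : Q.carrier) = g ↑u := rfl
    have h3 : ((eU u : ↥(LinearMap.range (g ∘ₗ U.subtype))) : Q.carrier) = g ↑u := by
      rw [heU, LinearEquiv.ofInjective_apply]
      rfl
    apply eU.injective
    rw [h1]
    exact Subtype.ext (h2.trans h3.symm)
  have hcompl : IsCompl U (LinearMap.ker r) := by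
    constructor
    · rw [disjoint_iff]
      rw [Submodule.eq_bot_iff]
      rintro x hx
      obtain ⟨hxU, hxk⟩ := Submodule.mem_inf.1 hx
      have : r x = 0 := hxk
      have h2 : r x = ⟨x, hxU⟩ := hru ⟨x, hxU⟩
      have : (⟨x, hxU⟩ : ↥U) = 0 := by rw [← h2, this]
      exact congrArg Subtype.val this
    · rw [codisjoint_iff, Submodule.eq_top_iff']
      intro x
      have hx1 : ((r x : ↥U) : M) ∈ U := (r x).2
      have hx2 : x - ↑(r x) ∈ LinearMap.ker r := by
        rw [LinearMap.mem_ker, map_sub, hru (r x), sub_self]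
      have : x = ↑(r x) + (x - ↑(r x)) := by abel
      rw [this]
      exact Submodule.add_mem _ (Submodule.mem_sup_left hx1) (Submodule.mem_sup_right hx2)
  rcases hM.2 (ModuleCat.of A ↥U) (ModuleCat.of A ↥(LinearMap.ker r))
      ⟨(Submodule.prodEquivOfIsCompl U (LinearMap.ker r) hcompl).symm⟩ with hsub | hsub
  · exact absurd hsub (not_subsingleton_iff_nontrivial.2 hUnt)
  · haveI : Subsingleton ↥(LinearMap.ker r) := hsub
    have hker : LinearMap.ker r = ⊥ := by
      rw [Submodule.eq_bot_iff]
      intro x hx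
      have : (⟨x, hx⟩ : ↥(LinearMap.ker r)) = 0 := Subsingleton.elim _ _
      exact congrArg Subtype.val this
    have hUtop : U = ⊤ := by
      have := hcompl.codisjoint
      rw [codisjoint_iff, hker, sup_bot_eq] at this
      exact this
    intro S T
    refine range_comparable hP0uni f0 ?_ ?_
    · rw [← hU, hUtop]; exact le_top
    · rw [← hU, hUtop]; exact le_top

end Central

section Assemble
variable {A : Type} [Ring A]
variable {X₁ Y X₂ : Type} [AddCommGroup X₁] [Module A X₁]
variable [AddCommGroup Y] [Module A Y] [AddCommGroup X₂] [Module A X₂]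

/-- auxiliary inf formula -/
theorem inf_perm {W₁ W₂ W₃ : Submodule A Y} (h12 : W₁ ⊓ W₂ = ⊥)
    (h123 : (W₁ ⊔ W₂) ⊓ W₃ = ⊥) : W₁ ⊓ (W₂ ⊔ W₃) = ⊥ := by
  rw [Submodule.eq_bot_iff]
  rintro x ⟨hx1, hx23⟩
  obtain ⟨w2, hw2, w3, hw3, rfl⟩ := Submodule.mem_sup.1 hx23
  have h3 : w3 ∈ (W₁ ⊔ W₂) ⊓ W₃ := by
    refine ⟨?_, hw3⟩
    have : w3 = (w2 + w3) - w2 := by abel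
    rw [this]
    exact Submodule.sub_mem _ (Submodule.mem_sup_left hx1) (Submodule.mem_sup_right hw2)
  rw [h123] at h3
  rw [(Submodule.mem_bot A).1 h3, add_zero] at hx1 ⊢
  have : w2 ∈ W₁ ⊓ W₂ := ⟨hx1, hw2⟩
  rw [h12] at this
  exact (Submodule.mem_bot A).1 this

theorem inf_perm' {W₁ W₂ W₃ : Submodule A Y} (h12 : W₁ ⊓ W₂ = ⊥)
    (h123 : (W₁ ⊔ W₂) ⊓ W₃ = ⊥) : W₂ ⊓ (W₁ ⊔ W₃) = ⊥ := by
  refine inf_perm ?_ ?_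
  · rw [inf_comm]; exact h12
  · rw [show W₂ ⊔ W₁ = W₁ ⊔ W₂ from sup_comm _ _]; exact h123

/-- one step of the no-three-summands argument -/
theorem noThree_aux (i : X₁ →ₗ[A] Y) (q : Y →ₗ[A] X₂)
    (hexact : LinearMap.range i = LinearMap.ker q) (hX₁ : IsUniserial A X₁)
    (W W' W'' : Submodule A Y) (hdisj : W ⊓ (W' ⊔ W'') = ⊥) (hsup : W ⊔ (W' ⊔ W'') = ⊤)
    (hW'W'' : W' ⊓ W'' = ⊥) (hqW : Submodule.map q W = ⊤)
    (hn' : W' ≠ ⊥) (hn'' : W'' ≠ ⊥) : False := by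
  have hIW : LinearMap.range i ⊔ W = ⊤ := by
    rw [Submodule.eq_top_iff']
    intro y
    have h1 : q y ∈ Submodule.map q W := by rw [hqW]; trivial
    obtain ⟨w, hw, hqw⟩ := Submodule.mem_map.1 h1
    have h2 : y - w ∈ LinearMap.ker q := by
      rw [LinearMap.mem_ker, map_sub, hqw, sub_self]
    rw [← hexact] at h2
    have h3 : y = (y - w) + w := by abel
    rw [h3]
    exact Submodule.add_mem _ (Submodule.mem_sup_left h2) (Submodule.mem_sup_right hw)
  have hcompl : IsCompl (W' ⊔ W'') W := by
    constructor
    · rw [disjoint_iff, inf_comm]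
      exact hdisj
    · rw [codisjoint_iff, sup_comm]
      exact hsup
  set p := Submodule.projectionOnto _ _ hcompl with hp
  have hkey : ∀ t : Y, t ∈ W' ⊔ W'' → (∃ ht : t ∈ W' ⊔ W'',
      (⟨t, ht⟩ : ↥(W' ⊔ W'')) ∈ LinearMap.range (p ∘ₗ i)) := by
    intro t ht
    refine ⟨ht, ?_⟩
    have h1 : t ∈ LinearMap.range i ⊔ W := by rw [hIW]; trivial
    obtain ⟨x, hx, w, hw, hxw⟩ := Submodule.mem_sup.1 h1
    obtain ⟨a, rfl⟩ := hx
    have h2 : p t = p (i a) := by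
      rw [← hxw, map_add, Submodule.projectionOnto_apply_of_mem_right hcompl hw, add_zero]
    have h3 : p t = ⟨t, ht⟩ := Submodule.projectionOnto_apply_left hcompl ⟨t, ht⟩
    exact ⟨a, by rw [LinearMap.comp_apply, ← h2, h3]⟩
  set S₁ : Submodule A ↥(W' ⊔ W'') := Submodule.comap (W' ⊔ W'').subtype W' with hS₁
  set S₂ : Submodule A ↥(W' ⊔ W'') := Submodule.comap (W' ⊔ W'').subtype W'' with hS₂
  have hS₁le : S₁ ≤ LinearMap.range (p ∘ₗ i) := by
    rintro ⟨t, ht⟩ hmem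
    obtain ⟨ht', hr⟩ := hkey t (le_sup_left (a := W') (b := W'') hmem)
    exact hr
  have hS₂le : S₂ ≤ LinearMap.range (p ∘ₗ i) := by
    rintro ⟨t, ht⟩ hmem
    obtain ⟨ht', hr⟩ := hkey t (le_sup_right (a := W') (b := W'') hmem)
    exact hr
  have hcmp := range_comparable hX₁ (p ∘ₗ i) hS₁le hS₂le
  rcases hcmp with h | h
  · -- W' ≤ W''
    refine hn' ?_
    rw [Submodule.eq_bot_iff]
    intro x hx
    have h1 : (⟨x, Submodule.mem_sup_left hx⟩ : ↥(W' ⊔ W'')) ∈ S₁ := hx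
    have h2 : x ∈ W'' := h h1
    have : x ∈ W' ⊓ W'' := ⟨hx, h2⟩
    rw [hW'W''] at this
    exact (Submodule.mem_bot A).1 this
  · refine hn'' ?_
    rw [Submodule.eq_bot_iff]
    intro x hx
    have h1 : (⟨x, Submodule.mem_sup_right hx⟩ : ↥(W' ⊔ W'')) ∈ S₂ := hx
    have h2 : x ∈ W' := h h1
    have : x ∈ W' ⊓ W'' := ⟨h2, hx⟩
    rw [hW'W''] at this
    exact (Submodule.mem_bot A).1 this

/-- there are no three independent nonzero summands in the middle of the sequence -/
theorem noThree (i : X₁ →ₗ[A] Y) (q : Y →ₗ[A] X₂) (hq : Surjective q)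
    (hexact : LinearMap.range i = LinearMap.ker q)
    (hX₁ : IsUniserial A X₁) (hX₂ : IsUniserial A X₂)
    (W₁ W₂ W₃ : Submodule A Y)
    (h12 : W₁ ⊓ W₂ = ⊥) (h123 : (W₁ ⊔ W₂) ⊓ W₃ = ⊥) (hsup : W₁ ⊔ W₂ ⊔ W₃ = ⊤)
    (hn1 : W₁ ≠ ⊥) (hn2 : W₂ ≠ ⊥) (hn3 : W₃ ≠ ⊥) : False := by
  have hqsup : Submodule.map q W₁ ⊔ Submodule.map q W₂ ⊔ Submodule.map q W₃ = ⊤ := by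
    rw [← Submodule.map_sup, ← Submodule.map_sup, hsup, Submodule.map_top,
      LinearMap.range_eq_top.2 hq]
  have h23 : W₂ ⊓ W₃ = ⊥ := by
    rw [Submodule.eq_bot_iff]
    rintro x ⟨hx2, hx3⟩
    have : x ∈ (W₁ ⊔ W₂) ⊓ W₃ := ⟨Submodule.mem_sup_right hx2, hx3⟩
    rw [h123] at this
    exact (Submodule.mem_bot A).1 this
  have h13 : W₁ ⊓ W₃ = ⊥ := by
    rw [Submodule.eq_bot_iff]
    rintro x ⟨hx1, hx3⟩
    have : x ∈ (W₁ ⊔ W₂) ⊓ W₃ := ⟨Submodule.mem_sup_left hx1, hx3⟩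
    rw [h123] at this
    exact (Submodule.mem_bot A).1 this
  have htop : Submodule.map q W₁ = ⊤ ∨ Submodule.map q W₂ = ⊤ ∨ Submodule.map q W₃ = ⊤ := by
    rcases hX₂ (Submodule.map q W₁) (Submodule.map q W₂) with h | h
    · rcases hX₂ (Submodule.map q W₂) (Submodule.map q W₃) with h' | h'
      · right; right
        rw [sup_eq_right.2 h, sup_eq_right.2 h'] at hqsup
        exact hqsup
      · right; left
        rw [sup_eq_right.2 h, sup_eq_left.2 h'] at hqsup
        exact hqsup
    · rcases hX₂ (Submodule.map q W₁) (Submodule.map q W₃) with h' | h'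
      · right; right
        rw [sup_eq_left.2 h, sup_eq_right.2 h'] at hqsup
        exact hqsup
      · left
        rw [sup_eq_left.2 h, sup_eq_left.2 h'] at hqsup
        exact hqsup
  rcases htop with h | h | h
  · exact noThree_aux i q hexact hX₁ W₁ W₂ W₃ (inf_perm h12 h123)
      (by rw [← sup_assoc]; exact hsup) h23 h hn2 hn3
  · exact noThree_aux i q hexact hX₁ W₂ W₁ W₃ (inf_perm' h12 h123)
      (by rw [← sup_assoc, show W₂ ⊔ W₁ = W₁ ⊔ W₂ from sup_comm _ _]; exact hsup) h13 h hn1 hn3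
  · exact noThree_aux i q hexact hX₁ W₃ W₁ W₂
      (by rw [inf_comm]; exact h123)
      (by rw [sup_comm]; exact hsup) h12 h hn1 hn2

end Assemble

section Final
variable {A : Type} [Ring A]
variable {X₁ Y X₂ : Type} [AddCommGroup X₁] [Module A X₁]
variable [AddCommGroup Y] [Module A Y] [AddCommGroup X₂] [Module A X₂]

/-- from a suitable complement pair, construct the required data -/
theorem final_construct (i : X₁ →ₗ[A] Y) (q : Y →ₗ[A] X₂)
    (hi : Injective i) (hexact : LinearMap.range i = LinearMap.ker q)
    (U V : Submodule A Y) (hcompl : IsCompl U V)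
    (hUor : Indec A ↥U ∨ Subsingleton ↥U) (hVor : Indec A ↥V ∨ Subsingleton ↥V)
    (hIV : LinearMap.range i ⊓ V = ⊥) (hqU : Submodule.map q U = ⊤) :
    ∃ (Y₁ Y₂ : ModuleCat.{0} A) (e : Y ≃ₗ[A] (↑Y₁ × ↑Y₂)),
      (Indec A ↑Y₁ ∨ Subsingleton ↑Y₁) ∧ (Indec A ↑Y₂ ∨ Subsingleton ↑Y₂) ∧
      Injective ((LinearMap.fst A ↑Y₁ ↑Y₂).comp (e.toLinearMap.comp i)) ∧
      Surjective ((LinearMap.snd A ↑Y₁ ↑Y₂).comp (e.toLinearMap.comp i)) ∧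
      Surjective (q.comp (e.symm.toLinearMap.comp (LinearMap.inl A ↑Y₁ ↑Y₂))) ∧
      Injective (q.comp (e.symm.toLinearMap.comp (LinearMap.inr A ↑Y₁ ↑Y₂))) := by
  have hIU : LinearMap.range i ⊔ U = ⊤ := by
    rw [Submodule.eq_top_iff']
    intro y
    have h1 : q y ∈ Submodule.map q U := by rw [hqU]; trivial
    obtain ⟨w, hw, hqw⟩ := Submodule.mem_map.1 h1
    have h2 : y - w ∈ LinearMap.ker q := by
      rw [LinearMap.mem_ker, map_sub, hqw, sub_self]
    rw [← hexact] at h2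
    have h3 : y = (y - w) + w := by abel
    rw [h3]
    exact Submodule.add_mem _ (Submodule.mem_sup_left h2) (Submodule.mem_sup_right hw)
  set pe := Submodule.prodEquivOfIsCompl U V hcompl with hpe
  set e : Y ≃ₗ[A] (↥U × ↥V) := pe.symm with he
  have he_symm : ∀ z : ↥U × ↥V, e.symm z = (z.1 : Y) + (z.2 : Y) := by
    intro z
    exact Submodule.coe_prodEquivOfIsCompl' U V hcompl z
  have he_eq : ∀ y : Y, y = ((e y).1 : Y) + ((e y).2 : Y) := by
    intro y
    conv_lhs => rw [← e.symm_apply_apply y]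
    exact he_symm (e y)
  refine ⟨ModuleCat.of A ↥U, ModuleCat.of A ↥V, e, hUor, hVor, ?_, ?_, ?_, ?_⟩
  · -- injectivity of the first component
    show Injective ((LinearMap.fst A ↥U ↥V).comp (e.toLinearMap.comp i))
    intro a b hab
    simp only [LinearMap.comp_apply, LinearEquiv.coe_coe, LinearMap.fst_apply] at hab
    apply hi
    have h1 : i a - i b = ((e (i a)).2 : Y) - ((e (i b)).2 : Y) := by
      conv_lhs => rw [he_eq (i a), he_eq (i b)]
      rw [hab]
      abel
    have h2 : i a - i b ∈ V := by
      rw [h1]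
      exact Submodule.sub_mem _ (e (i a)).2.2 (e (i b)).2.2
    have h3 : i a - i b ∈ LinearMap.range i := by
      rw [← map_sub]
      exact LinearMap.mem_range_self i (a - b)
    have h4 : i a - i b ∈ LinearMap.range i ⊓ V := ⟨h3, h2⟩
    rw [hIV] at h4
    have h5 : i a - i b = 0 := (Submodule.mem_bot A).1 h4
    have : i a = i b := by
      have := sub_eq_zero.1 h5
      exact this
    rw [this]
  · -- surjectivity onto the second component
    show Surjective ((LinearMap.snd A ↥U ↥V).comp (e.toLinearMap.comp i))
    intro v
    have h1 : (v : Y) ∈ LinearMap.range i ⊔ U := by rw [hIU]; trivial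
    obtain ⟨x, hx, u, hu, hxu⟩ := Submodule.mem_sup.1 h1
    obtain ⟨a, rfl⟩ := hx
    refine ⟨a, ?_⟩
    simp only [LinearMap.comp_apply, LinearEquiv.coe_coe, LinearMap.snd_apply]
    have h2 : i a = (v : Y) - u := by rw [← hxu]; abel
    have h3 : e ↑v = (0, v) :=
      Submodule.prodEquivOfIsCompl_symm_apply_right U V hcompl v
    have h4 : e ↑(⟨u, hu⟩ : ↥U) = ((⟨u, hu⟩ : ↥U), 0) :=
      Submodule.prodEquivOfIsCompl_symm_apply_left U V hcompl ⟨u, hu⟩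
    have h5 : e (i a) = (0, v) - ((⟨u, hu⟩ : ↥U), 0) := by
      rw [h2, show (v : Y) - u = ↑v - ↑(⟨u, hu⟩ : ↥U) from rfl, map_sub, h3, h4]
    rw [h5]
    simp
  · -- surjectivity from the first summand
    show Surjective (q.comp (e.symm.toLinearMap.comp (LinearMap.inl A ↥U ↥V)))
    intro x₂
    have h1 : x₂ ∈ Submodule.map q U := by rw [hqU]; trivial
    obtain ⟨u, hu, hqu⟩ := Submodule.mem_map.1 h1
    refine ⟨⟨u, hu⟩, ?_⟩
    simp only [LinearMap.comp_apply, LinearEquiv.coe_coe, LinearMap.inl_apply]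
    have h2 : e.symm ((⟨u, hu⟩ : ↥U), 0) = u := by
      rw [he_symm]
      simp
    rw [h2, hqu]
  · -- injectivity from the second summand
    show Injective (q.comp (e.symm.toLinearMap.comp (LinearMap.inr A ↥U ↥V)))
    intro a b hab
    simp only [LinearMap.comp_apply, LinearEquiv.coe_coe, LinearMap.inr_apply] at hab
    have h2a : e.symm ((0 : ↥U), a) = (a : Y) := by rw [he_symm]; simp
    have h2b : e.symm ((0 : ↥U), b) = (b : Y) := by rw [he_symm]; simp
    rw [h2a, h2b] at hab
    have h3 : (a : Y) - (b : Y) ∈ LinearMap.ker q := by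
      rw [LinearMap.mem_ker, map_sub, hab, sub_self]
    rw [← hexact] at h3
    have h4 : (a : Y) - (b : Y) ∈ V := Submodule.sub_mem _ a.2 b.2
    have h5 : (a : Y) - (b : Y) ∈ LinearMap.range i ⊓ V := ⟨h3, h4⟩
    rw [hIV] at h5
    exact Subtype.ext (sub_eq_zero.1 ((Submodule.mem_bot A).1 h5))

/-- if the kernel has a complement inside a transversal summand, the sequence splits -/
theorem split_contra (i : X₁ →ₗ[A] Y) (q : Y →ₗ[A] X₂)
    (hexact : LinearMap.range i = LinearMap.ker q)
    (hnonsplit : ¬ ∃ s : X₂ →ₗ[A] Y, q.comp s = LinearMap.id)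
    (U : Submodule A Y) (hIU : LinearMap.range i ⊓ U = ⊥)
    (hqU : Submodule.map q U = ⊤) : False := by
  apply hnonsplit
  set qU : ↥U →ₗ[A] X₂ := q ∘ₗ U.subtype with hqU'
  have hinj : Injective ⇑qU := by
    intro a b hab
    have h1 : (a : Y) - (b : Y) ∈ LinearMap.ker q := by
      rw [LinearMap.mem_ker, map_sub]
      have : q ↑a = q ↑b := hab
      rw [this, sub_self]
    rw [← hexact] at h1
    have h2 : (a : Y) - (b : Y) ∈ U := Submodule.sub_mem _ a.2 b.2
    have h3 : (a : Y) - (b : Y) ∈ LinearMap.range i ⊓ U := ⟨h1, h2⟩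
    rw [hIU] at h3
    exact Subtype.ext (sub_eq_zero.1 ((Submodule.mem_bot A).1 h3))
  have hsurj : Surjective ⇑qU := by
    intro x₂
    have h1 : x₂ ∈ Submodule.map q U := by rw [hqU]; trivial
    obtain ⟨u, hu, hqu⟩ := Submodule.mem_map.1 h1
    exact ⟨⟨u, hu⟩, hqu⟩
  set eq := LinearEquiv.ofBijective qU ⟨hinj, hsurj⟩ with heq
  refine ⟨U.subtype ∘ₗ (eq.symm : X₂ →ₗ[A] ↥U), ?_⟩
  ext x
  simp only [LinearMap.comp_apply, LinearMap.id_apply, LinearEquiv.coe_coe]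
  exact eq.apply_symm_apply x

/-- splitting the range of an injection along a decomposition of its source -/
theorem split_range {Z Z₁ Z₂ : Type} [AddCommGroup Z] [Module A Z] [AddCommGroup Z₁]
    [Module A Z₁] [AddCommGroup Z₂] [Module A Z₂]
    (j : Z →ₗ[A] Y) (hj : Injective ⇑j) (e₁ : Z ≃ₗ[A] (Z₁ × Z₂))
    (h1 : Nontrivial Z₁) (h2 : Nontrivial Z₂) :
    ∃ W₁ W₂ : Submodule A Y, W₁ ⊓ W₂ = ⊥ ∧ W₁ ⊔ W₂ = LinearMap.range j ∧
      W₁ ≠ ⊥ ∧ W₂ ≠ ⊥ := by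
  set k₁ : Z₁ →ₗ[A] Y := j ∘ₗ (e₁.symm.toLinearMap ∘ₗ LinearMap.inl A Z₁ Z₂) with hk₁
  set k₂ : Z₂ →ₗ[A] Y := j ∘ₗ (e₁.symm.toLinearMap ∘ₗ LinearMap.inr A Z₁ Z₂) with hk₂
  have hk₁app : ∀ a, k₁ a = j (e₁.symm (a, 0)) := fun a => rfl
  have hk₂app : ∀ b, k₂ b = j (e₁.symm (0, b)) := fun b => rfl
  have hk₁inj : Injective ⇑k₁ := by
    intro a b hab
    rw [hk₁app, hk₁app] at hab
    have := e₁.symm.injective (hj hab)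
    exact (Prod.ext_iff.1 this).1
  have hk₂inj : Injective ⇑k₂ := by
    intro a b hab
    rw [hk₂app, hk₂app] at hab
    have := e₁.symm.injective (hj hab)
    exact (Prod.ext_iff.1 this).2
  refine ⟨LinearMap.range k₁, LinearMap.range k₂, ?_, ?_, ?_, ?_⟩
  · rw [Submodule.eq_bot_iff]
    rintro x ⟨⟨a, ha⟩, ⟨b, hb⟩⟩
    rw [← ha]
    rw [hk₁app] at ha
    rw [hk₂app] at hb
    have h3 : e₁.symm ((a, 0) : Z₁ × Z₂) = e₁.symm (0, b) := hj (by rw [ha, hb])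
    have h4 := e₁.symm.injective h3
    have h5 : a = 0 := (Prod.ext_iff.1 h4).1
    rw [hk₁app, h5]
    exact (congrArg j (map_zero e₁.symm)).trans (map_zero j)
  · refine le_antisymm (sup_le ?_ ?_) ?_
    · rw [hk₁]
      exact LinearMap.range_comp_le_range _ j
    · rw [hk₂]
      exact LinearMap.range_comp_le_range _ j
    · rintro y ⟨z, rfl⟩
      have hz : j z = k₁ (e₁ z).1 + k₂ (e₁ z).2 := by
        rw [hk₁app, hk₂app, ← map_add, ← map_add, Prod.mk_add_mk, add_zero, zero_add,
          e₁.symm_apply_apply]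
      rw [hz]
      exact Submodule.add_mem _ (Submodule.mem_sup_left (LinearMap.mem_range_self _ _))
        (Submodule.mem_sup_right (LinearMap.mem_range_self _ _))
  · obtain ⟨a, ha⟩ := exists_ne (0 : Z₁)
    refine (Submodule.ne_bot_iff _).2 ⟨k₁ a, LinearMap.mem_range_self _ _, fun h => ha ?_⟩
    exact hk₁inj (by rw [h, map_zero])
  · obtain ⟨b, hb⟩ := exists_ne (0 : Z₂)
    refine (Submodule.ne_bot_iff _).2 ⟨k₂ b, LinearMap.mem_range_self _ _, fun h => hb ?_⟩
    exact hk₂inj (by rw [h, map_zero])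

end Final
end StmtAux

/-- Let `A` be a Nakayama algebra and `0 → X₁ → Y → X₂ → 0` a
non-split short exact sequence with `X₁`, `X₂` indecomposable.  Then `Y` has at most two
indecomposable direct summands `Y₁, Y₂`, and the sequence is isomorphic to one in which
`X₁` embeds into `Y₁` and surjects onto `Y₂`, while `Y₁` surjects onto `X₂` and `Y₂`
embeds into `X₂`. -/
theorem nonsplit_ses_structure_over_nakayama
    (K A : Type) [Field K] [Ring A] [Algebra K A] [FiniteDimensional K A]
    (hNak : IsNakayamaAlgebra A)
    (X₁ Y X₂ : Type) [AddCommGroup X₁] [Module A X₁] [Module.Finite A X₁]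
    [AddCommGroup Y] [Module A Y] [Module.Finite A Y]
    [AddCommGroup X₂] [Module A X₂] [Module.Finite A X₂]
    (i : X₁ →ₗ[A] Y) (q : Y →ₗ[A] X₂)
    (hi : Injective i) (hq : Surjective q) (hexact : LinearMap.range i = LinearMap.ker q)
    (hnonsplit : ¬ ∃ s : X₂ →ₗ[A] Y, q.comp s = LinearMap.id)
    (h1 : Indec A X₁) (h2 : Indec A X₂) :
    ∃ (Y₁ Y₂ : ModuleCat.{0} A) (e : Y ≃ₗ[A] (↑Y₁ × ↑Y₂)),
      (Indec A ↑Y₁ ∨ Subsingleton ↑Y₁) ∧ (Indec A ↑Y₂ ∨ Subsingleton ↑Y₂) ∧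
      Injective ((LinearMap.fst A ↑Y₁ ↑Y₂).comp (e.toLinearMap.comp i)) ∧
      Surjective ((LinearMap.snd A ↑Y₁ ↑Y₂).comp (e.toLinearMap.comp i)) ∧
      Surjective (q.comp (e.symm.toLinearMap.comp (LinearMap.inl A ↑Y₁ ↑Y₂))) ∧
      Injective (q.comp (e.symm.toLinearMap.comp (LinearMap.inr A ↑Y₁ ↑Y₂))) := by
  classical
  have hX₁uni : IsUniserial A X₁ := StmtAux.indec_uniserial K hNak X₁ h1
  have hX₂uni : IsUniserial A X₂ := StmtAux.indec_uniserial K hNak X₂ h2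
  have hYnt : Nontrivial Y := by
    obtain ⟨x, y, hxy⟩ := h1.1
    exact ⟨i x, i y, fun h => hxy (hi h)⟩
  by_cases hYind : Indec A Y
  · refine StmtAux.final_construct i q hi hexact ⊤ ⊥ isCompl_top_bot ?_ ?_ ?_ ?_
    · exact Or.inl (StmtAux.indec_congr Submodule.topEquiv.symm hYind)
    · exact Or.inr inferInstance
    · simp
    · rw [Submodule.map_top]
      exact LinearMap.range_eq_top.2 hq
  · obtain ⟨Mm, Nn, e₀, hMnt, hNnt⟩ := StmtAux.exists_decomp hYnt hYind
    set jM : ↑Mm →ₗ[A] Y := e₀.symm.toLinearMap.comp (LinearMap.inl A ↑Mm ↑Nn) with hjM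
    set jN : ↑Nn →ₗ[A] Y := e₀.symm.toLinearMap.comp (LinearMap.inr A ↑Mm ↑Nn) with hjN
    have hjMapp : ∀ a, jM a = e₀.symm (a, 0) := fun a => rfl
    have hjNapp : ∀ b, jN b = e₀.symm (0, b) := fun b => rfl
    have hjMinj : Injective ⇑jM := by
      intro a b hab
      rw [hjMapp, hjMapp] at hab
      exact (Prod.ext_iff.1 (e₀.symm.injective hab)).1
    have hjNinj : Injective ⇑jN := by
      intro a b hab
      rw [hjNapp, hjNapp] at hab
      exact (Prod.ext_iff.1 (e₀.symm.injective hab)).2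
    set U := LinearMap.range jM with hU
    set V := LinearMap.range jN with hV
    have hUV : IsCompl U V := by
      constructor
      · rw [disjoint_iff, Submodule.eq_bot_iff]
        rintro x ⟨⟨a, ha⟩, ⟨b, hb⟩⟩
        rw [hjMapp] at ha
        rw [hjNapp] at hb
        have h3 : e₀.symm ((a, 0) : ↑Mm × ↑Nn) = e₀.symm (0, b) := by rw [ha, hb]
        have h5 : a = 0 := (Prod.ext_iff.1 (e₀.symm.injective h3)).1
        rw [← ha, h5]
        simp
      · rw [codisjoint_iff, Submodule.eq_top_iff']
        intro y
        have hz : y = jM (e₀ y).1 + jN (e₀ y).2 := by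
          rw [hjMapp, hjNapp, ← map_add, Prod.mk_add_mk, add_zero, zero_add,
            e₀.symm_apply_apply]
        rw [hz]
        exact Submodule.add_mem _ (Submodule.mem_sup_left (LinearMap.mem_range_self _ _))
          (Submodule.mem_sup_right (LinearMap.mem_range_self _ _))
    have hUne : U ≠ ⊥ := by
      obtain ⟨a, ha⟩ := exists_ne (0 : ↑Mm)
      refine (Submodule.ne_bot_iff _).2 ⟨jM a, LinearMap.mem_range_self _ _, fun h => ha ?_⟩
      exact hjMinj (by rw [h, map_zero])
    have hVne : V ≠ ⊥ := by
      obtain ⟨b, hb⟩ := exists_ne (0 : ↑Nn)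
      refine (Submodule.ne_bot_iff _).2 ⟨jN b, LinearMap.mem_range_self _ _, fun h => hb ?_⟩
      exact hjNinj (by rw [h, map_zero])
    have hMind : Indec A ↑Mm := by
      refine ⟨hMnt, fun M₁ M₂ hiso => ?_⟩
      by_contra hcon
      push_neg at hcon
      obtain ⟨hs1, hs2⟩ := hcon
      obtain ⟨W₁, W₂, hw12, hwsup, hwn1, hwn2⟩ := StmtAux.split_range jM hjMinj hiso.some
        hs1 hs2
      refine StmtAux.noThree i q hq hexact hX₁uni hX₂uni W₁ W₂ V hw12 ?_ ?_ hwn1 hwn2 hVne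
      · rw [hwsup, ← hU, ← disjoint_iff]
        exact hUV.disjoint
      · rw [hwsup, ← hU, ← codisjoint_iff]
        exact hUV.codisjoint
    have hNind : Indec A ↑Nn := by
      refine ⟨hNnt, fun M₁ M₂ hiso => ?_⟩
      by_contra hcon
      push_neg at hcon
      obtain ⟨hs1, hs2⟩ := hcon
      obtain ⟨W₁, W₂, hw12, hwsup, hwn1, hwn2⟩ := StmtAux.split_range jN hjNinj hiso.some
        hs1 hs2
      refine StmtAux.noThree i q hq hexact hX₁uni hX₂uni W₁ W₂ U hw12 ?_ ?_ hwn1 hwn2 hUne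
      · rw [hwsup, ← hV, inf_comm, ← disjoint_iff]
        exact hUV.disjoint
      · rw [hwsup, ← hV, sup_comm, ← codisjoint_iff]
        exact hUV.codisjoint
    have hUind : Indec A ↥U := StmtAux.indec_congr (LinearEquiv.ofInjective jM hjMinj) hMind
    have hVind : Indec A ↥V := StmtAux.indec_congr (LinearEquiv.ofInjective jN hjNinj) hNind
    have hIUV : LinearMap.range i ⊓ U = ⊥ ∨ LinearMap.range i ⊓ V = ⊥ := by
      rcases StmtAux.range_comparable hX₁uni i
          (inf_le_left : LinearMap.range i ⊓ U ≤ LinearMap.range i)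
          (inf_le_left : LinearMap.range i ⊓ V ≤ LinearMap.range i) with h | h
      · left
        rw [Submodule.eq_bot_iff]
        rintro x ⟨hxI, hxU⟩
        have hxV : x ∈ V := (h ⟨hxI, hxU⟩).2
        have : x ∈ U ⊓ V := ⟨hxU, hxV⟩
        rw [disjoint_iff.1 hUV.disjoint] at this
        exact (Submodule.mem_bot A).1 this
      · right
        rw [Submodule.eq_bot_iff]
        rintro x ⟨hxI, hxV⟩
        have hxU : x ∈ U := (h ⟨hxI, hxV⟩).2
        have : x ∈ U ⊓ V := ⟨hxU, hxV⟩
        rw [disjoint_iff.1 hUV.disjoint] at this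
        exact (Submodule.mem_bot A).1 this
    have hq2 : Submodule.map q U = ⊤ ∨ Submodule.map q V = ⊤ := by
      have hsupq : Submodule.map q U ⊔ Submodule.map q V = ⊤ := by
        rw [← Submodule.map_sup, codisjoint_iff.1 hUV.codisjoint, Submodule.map_top]
        exact LinearMap.range_eq_top.2 hq
      rcases hX₂uni (Submodule.map q U) (Submodule.map q V) with h | h
      · right; rwa [sup_eq_right.2 h] at hsupq
      · left; rwa [sup_eq_left.2 h] at hsupq
    rcases hIUV with hIU | hIV
    · rcases hq2 with hqU | hqV
      · exact (StmtAux.split_contra i q hexact hnonsplit U hIU hqU).elim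
      · exact StmtAux.final_construct i q hi hexact V U hUV.symm (Or.inl hVind)
          (Or.inl hUind) hIU hqV
    · rcases hq2 with hqU | hqV
      · exact StmtAux.final_construct i q hi hexact U V hUV (Or.inl hUind)
          (Or.inl hVind) hIV hqU
      · exact (StmtAux.split_contra i q hexact hnonsplit V hIV hqV).elim

end
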